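/- Let a₊, a₋ > 0 and set K₀(γ) = ((1-γ)/(2(γ+1))) · ((a₊+a₋)/a₊)^{(1-γ)/(2(γ+1))} · (a₋/a₊)^{1/2} · ∫_{a₊/(a₊+a₋)}^{1} (1-ξ)^{-1/2} ξ^{-γ/(γ+1)} dξ for γ ∈ ]-1,1[, γ ≠ 0, and K₀(0) = a₋/a₊. Then K₀ : ]-1,1[ → ]0,+∞[ is strictly monotone decreasing, with lim_{γ→(-1)⁺} K₀(γ) = +∞ and lim_{γ→1⁻} K₀(γ) = 0. -/

import Mathlib

open Set MeasureTheory intervalIntegral Filter Topology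

namespace Stmt9Aux

noncomputable def w (ξ : ℝ) : ℝ := (1 - ξ) ^ (-(1:ℝ)/2)

noncomputable def g (l t : ℝ) : ℝ :=
  ∫ ξ in l..1, w ξ * (t * (l⁻¹ * ξ) ^ t * ξ ^ (-(1:ℝ)/2))

lemma w_nonneg {ξ : ℝ} (hξ : ξ ≤ 1) : 0 ≤ w ξ :=
  Real.rpow_nonneg (by linarith) _

lemma w_pos {ξ : ℝ} (hξ : ξ < 1) : 0 < w ξ :=
  Real.rpow_pos_of_pos (by linarith) _

lemma w_intInt (a b : ℝ) : IntervalIntegrable w volume a b := by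
  have h : IntervalIntegrable (fun x : ℝ => x ^ (-(1:ℝ)/2)) volume (1 - a) (1 - b) :=
    intervalIntegral.intervalIntegrable_rpow' (by norm_num)
  have := h.comp_sub_left 1
  exact (by simpa [sub_sub_cancel] using this :
    IntervalIntegrable (fun ξ : ℝ => (1 - ξ) ^ (-(1:ℝ)/2)) volume a b)

variable {l : ℝ}

lemma contOn_rpow (hl0 : 0 < l) (p : ℝ) :
    ContinuousOn (fun ξ : ℝ => ξ ^ p) (Icc l 1) :=
  ContinuousOn.rpow_const continuousOn_id fun x hx => Or.inl (hl0.trans_le hx.1).ne'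

lemma contOn_g (hl0 : 0 < l) (t : ℝ) :
    ContinuousOn (fun ξ : ℝ => t * (l⁻¹ * ξ) ^ t * ξ ^ (-(1:ℝ)/2)) (Icc l 1) := by
  apply ContinuousOn.mul
  · apply ContinuousOn.mul continuousOn_const
    refine (continuousOn_const.mul continuousOn_id).rpow_const fun x hx => Or.inl ?_
    have hx0 : 0 < x := hl0.trans_le hx.1
    exact mul_ne_zero (inv_ne_zero hl0.ne') hx0.ne'
  · exact contOn_rpow hl0 _

lemma int_w_rpow (hl0 : 0 < l) (p : ℝ) {a b : ℝ}
    (ha : a ∈ Icc l 1) (hb : b ∈ Icc l 1) :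
    IntervalIntegrable (fun ξ => w ξ * ξ ^ p) volume a b :=
  (w_intInt a b).mul_continuousOn ((contOn_rpow hl0 p).mono (uIcc_subset_Icc ha hb))

lemma int_g (hl0 : 0 < l) (t : ℝ) {a b : ℝ} (ha : a ∈ Icc l 1) (hb : b ∈ Icc l 1) :
    IntervalIntegrable (fun ξ => w ξ * (t * (l⁻¹ * ξ) ^ t * ξ ^ (-(1:ℝ)/2))) volume a b :=
  (w_intInt a b).mul_continuousOn ((contOn_g hl0 t).mono (uIcc_subset_Icc ha hb))

lemma g_eq (hl0 : 0 < l) (hl1 : l < 1) (t : ℝ) :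
    g l t = t * (l⁻¹) ^ t * ∫ ξ in l..1, w ξ * ξ ^ (t - 1/2) := by
  rw [g, ← intervalIntegral.integral_const_mul]
  apply intervalIntegral.integral_congr
  intro ξ hξ
  rw [uIcc_of_le hl1.le] at hξ
  dsimp only
  have hξ0 : 0 < ξ := hl0.trans_le hξ.1
  have h1 : (l⁻¹ * ξ) ^ t = (l⁻¹) ^ t * ξ ^ t :=
    Real.mul_rpow (by positivity) hξ0.le
  have h2 : ξ ^ t * ξ ^ (-(1:ℝ)/2) = ξ ^ (t - 1/2) := by
    rw [← Real.rpow_add hξ0]; ring_nf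
  rw [h1, ← h2]; ring

lemma integral_w (hl1 : l ≤ 1) : ∫ ξ in l..1, w ξ = 2 * (1 - l) ^ ((1:ℝ)/2) := by
  have h : (∫ ξ in l..1, w ξ) = ∫ x in (1 - 1)..(1 - l), x ^ (-(1:ℝ)/2) := by
    simp only [w]
    exact intervalIntegral.integral_comp_sub_left (fun x : ℝ => x ^ (-(1:ℝ)/2)) 1
  rw [h, integral_rpow (Or.inl (by norm_num))]
  rw [show (1:ℝ) - 1 = 0 by norm_num, show -(1:ℝ)/2 + 1 = 1/2 by norm_num,
    Real.zero_rpow (by norm_num)]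
  ring

lemma g_half (hl0 : 0 < l) (hl1 : l < 1) :
    g l (1/2) = (l⁻¹ - 1) ^ ((1:ℝ)/2) := by
  rw [g_eq hl0 hl1]
  have h1 : (∫ ξ in l..1, w ξ * ξ ^ ((1:ℝ)/2 - 1/2)) = 2 * (1 - l) ^ ((1:ℝ)/2) := by
    rw [show (1:ℝ)/2 - 1/2 = 0 by norm_num]
    simp only [Real.rpow_zero, mul_one]
    exact integral_w hl1.le
  rw [h1]
  have hmul : (l⁻¹) ^ ((1:ℝ)/2) * (1 - l) ^ ((1:ℝ)/2) = (l⁻¹ * (1 - l)) ^ ((1:ℝ)/2) :=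
    (Real.mul_rpow (by positivity) (by linarith)).symm
  have hval : l⁻¹ * (1 - l) = l⁻¹ - 1 := by field_simp
  rw [← hval, ← hmul]; ring

lemma g_pos (hl0 : 0 < l) (hl1 : l < 1) {t : ℝ} (ht : 0 < t) : 0 < g l t := by
  apply intervalIntegral_pos_of_pos_on (int_g hl0 t ⟨le_refl l, hl1.le⟩ ⟨hl1.le, le_refl 1⟩)
    _ hl1
  intro ξ hξ
  have hξ0 : 0 < ξ := hl0.trans hξ.1
  exact mul_pos (w_pos hξ.2)
    (mul_pos (mul_pos ht (Real.rpow_pos_of_pos (by positivity) t))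
      (Real.rpow_pos_of_pos hξ0 _))

lemma g_lt (hl0 : 0 < l) (hl1 : l < 1) {t₁ t₂ : ℝ} (ht₁ : 0 < t₁) (h12 : t₁ < t₂) :
    g l t₁ < g l t₂ := by
  have hi₁ := int_g hl0 t₁ (l := l) ⟨le_refl l, hl1.le⟩ ⟨hl1.le, le_refl 1⟩
  have hi₂ := int_g hl0 t₂ (l := l) ⟨le_refl l, hl1.le⟩ ⟨hl1.le, le_refl 1⟩
  have key : 0 < g l t₂ - g l t₁ := by
    rw [g, g, ← intervalIntegral.integral_sub hi₂ hi₁]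
    apply intervalIntegral_pos_of_pos_on (hi₂.sub hi₁) _ hl1
    intro ξ hξ
    have hξ0 : 0 < ξ := hl0.trans hξ.1
    have hb : 1 < l⁻¹ * ξ := by
      rw [inv_mul_eq_div, one_lt_div hl0]; exact hξ.1
    have hB1 : 0 < (l⁻¹ * ξ) ^ t₁ := Real.rpow_pos_of_pos (by linarith) _
    have hr : (l⁻¹ * ξ) ^ t₁ < (l⁻¹ * ξ) ^ t₂ :=
      Real.rpow_lt_rpow_of_exponent_lt hb h12
    have hc : 0 < ξ ^ (-(1:ℝ)/2) := Real.rpow_pos_of_pos hξ0 _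
    have hw : 0 < w ξ := w_pos hξ.2
    have hmain : t₁ * (l⁻¹ * ξ) ^ t₁ < t₂ * (l⁻¹ * ξ) ^ t₂ :=
      mul_lt_mul'' h12 hr ht₁.le hB1.le
    have := mul_lt_mul_of_pos_left
      (mul_lt_mul_of_pos_right hmain hc) hw
    linarith
  linarith

lemma g_le (hl0 : 0 < l) (hl1 : l < 1) {t : ℝ} (ht : 0 < t) :
    g l t ≤ t * (l⁻¹) ^ t * ∫ ξ in l..1, w ξ * ξ ^ (-(1:ℝ)/2) := by
  rw [g, ← intervalIntegral.integral_const_mul]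
  apply intervalIntegral.integral_mono_on hl1.le
    (int_g hl0 t ⟨le_refl l, hl1.le⟩ ⟨hl1.le, le_refl 1⟩)
    ((int_w_rpow hl0 _ ⟨le_refl l, hl1.le⟩ ⟨hl1.le, le_refl 1⟩).const_mul _)
  intro ξ hξ
  have hξ0 : 0 < ξ := hl0.trans_le hξ.1
  have h1 : (l⁻¹ * ξ) ^ t ≤ (l⁻¹) ^ t := by
    apply Real.rpow_le_rpow (by positivity) _ ht.le
    exact mul_le_of_le_one_right (by positivity) hξ.2
  have hwc : 0 ≤ w ξ * ξ ^ (-(1:ℝ)/2) :=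
    mul_nonneg (w_nonneg hξ.2) (Real.rpow_nonneg hξ0.le _)
  calc w ξ * (t * (l⁻¹ * ξ) ^ t * ξ ^ (-(1:ℝ)/2))
      = (t * (l⁻¹ * ξ) ^ t) * (w ξ * ξ ^ (-(1:ℝ)/2)) := by ring
    _ ≤ (t * (l⁻¹) ^ t) * (w ξ * ξ ^ (-(1:ℝ)/2)) :=
        mul_le_mul_of_nonneg_right (mul_le_mul_of_nonneg_left h1 ht.le) hwc

lemma D_pos (hl0 : 0 < l) (hl1 : l < 1) :
    0 < ∫ ξ in ((l+1)/2)..1, w ξ * ξ ^ (-(1:ℝ)/2) := by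
  have hc1 : l < (l+1)/2 := by linarith
  have hc2 : (l+1)/2 < 1 := by linarith
  apply intervalIntegral_pos_of_pos_on
    (int_w_rpow hl0 _ ⟨hc1.le, hc2.le⟩ ⟨hl1.le, le_refl 1⟩) _ hc2
  intro ξ hξ
  have hξ0 : 0 < ξ := (hl0.trans hc1).trans hξ.1
  exact mul_pos (w_pos hξ.2) (Real.rpow_pos_of_pos hξ0 _)

lemma g_ge (hl0 : 0 < l) (hl1 : l < 1) {t : ℝ} (ht : 0 < t) :
    t * (∫ ξ in ((l+1)/2)..1, w ξ * ξ ^ (-(1:ℝ)/2)) ≤ g l t := by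
  have hc1 : l < (l+1)/2 := by linarith
  have hc2 : (l+1)/2 < 1 := by linarith
  have hcI : (l+1)/2 ∈ Icc l 1 := ⟨hc1.le, hc2.le⟩
  have hlI : l ∈ Icc l 1 := ⟨le_refl l, hl1.le⟩
  have h1I : (1:ℝ) ∈ Icc l 1 := ⟨hl1.le, le_refl 1⟩
  have hsplit : (∫ ξ in l..((l+1)/2), w ξ * (t * (l⁻¹ * ξ) ^ t * ξ ^ (-(1:ℝ)/2)))
      + (∫ ξ in ((l+1)/2)..1, w ξ * (t * (l⁻¹ * ξ) ^ t * ξ ^ (-(1:ℝ)/2))) = g l t :=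
    intervalIntegral.integral_add_adjacent_intervals (int_g hl0 t hlI hcI) (int_g hl0 t hcI h1I)
  have h₁ : 0 ≤ ∫ ξ in l..((l+1)/2), w ξ * (t * (l⁻¹ * ξ) ^ t * ξ ^ (-(1:ℝ)/2)) := by
    apply intervalIntegral.integral_nonneg hc1.le
    intro ξ hξ
    have hξ0 : 0 < ξ := hl0.trans_le hξ.1
    have hξ1 : ξ ≤ 1 := hξ.2.trans hc2.le
    have : (0:ℝ) < l⁻¹ * ξ := by positivity
    exact mul_nonneg (w_nonneg hξ1)
      (mul_nonneg (mul_nonneg ht.le (Real.rpow_pos_of_pos this t).le)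
        (Real.rpow_nonneg hξ0.le _))
  have h₂ : t * (∫ ξ in ((l+1)/2)..1, w ξ * ξ ^ (-(1:ℝ)/2))
      ≤ ∫ ξ in ((l+1)/2)..1, w ξ * (t * (l⁻¹ * ξ) ^ t * ξ ^ (-(1:ℝ)/2)) := by
    rw [← intervalIntegral.integral_const_mul]
    apply intervalIntegral.integral_mono_on hc2.le
      ((int_w_rpow hl0 _ hcI h1I).const_mul t) (int_g hl0 t hcI h1I)
    intro ξ hξ
    have hξ0 : 0 < ξ := (hl0.trans hc1).trans_le hξ.1
    have hb : 1 ≤ l⁻¹ * ξ := by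
      rw [inv_mul_eq_div, le_div_iff₀ hl0, one_mul]
      linarith [hξ.1]
    have hB : 1 ≤ (l⁻¹ * ξ) ^ t := by
      calc (1:ℝ) = (l⁻¹ * ξ) ^ (0:ℝ) := (Real.rpow_zero _).symm
        _ ≤ (l⁻¹ * ξ) ^ t := Real.rpow_le_rpow_of_exponent_le hb ht.le
    have hwc : 0 ≤ w ξ * ξ ^ (-(1:ℝ)/2) :=
      mul_nonneg (w_nonneg hξ.2) (Real.rpow_nonneg hξ0.le _)
    have hexp : w ξ * (t * (l⁻¹ * ξ) ^ t * ξ ^ (-(1:ℝ)/2)) - t * (w ξ * ξ ^ (-(1:ℝ)/2))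
        = (w ξ * ξ ^ (-(1:ℝ)/2)) * (t * ((l⁻¹ * ξ) ^ t - 1)) := by ring
    have hpr : 0 ≤ (w ξ * ξ ^ (-(1:ℝ)/2)) * (t * ((l⁻¹ * ξ) ^ t - 1)) :=
      mul_nonneg hwc (mul_nonneg ht.le (by linarith))
    linarith
  linarith

end Stmt9Aux

/-- the function `K₀` is positive on `]-1,1[`, strictly decreasing,
with `K₀ → +∞` as `γ → -1⁺` and `K₀ → 0` as `γ → 1⁻`. -/
theorem stmt_9 (ap am : ℝ) (hap : 0 < ap) (ham : 0 < am)
    (K₀ : ℝ → ℝ)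
    (hK : ∀ γ ∈ Ioo (-1 : ℝ) 1, γ ≠ 0 →
      K₀ γ = (1 - γ) / (2 * (γ + 1)) *
        ((ap + am) / ap) ^ ((1 - γ) / (2 * (γ + 1))) * (am / ap) ^ ((1 : ℝ) / 2) *
        ∫ ξ in (ap / (ap + am))..1, (1 - ξ) ^ (-(1 : ℝ) / 2) * ξ ^ (-(γ / (γ + 1))))
    (hK0 : K₀ 0 = am / ap) :
    (∀ γ ∈ Ioo (-1 : ℝ) 1, 0 < K₀ γ) ∧
      StrictAntiOn K₀ (Ioo (-1 : ℝ) 1) ∧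
      Tendsto K₀ (𝓝[>] (-1 : ℝ)) atTop ∧
      Tendsto K₀ (𝓝[<] (1 : ℝ)) (𝓝 0) := by
  have hsum : 0 < ap + am := by linarith
  set l : ℝ := ap / (ap + am) with hl
  have hl0 : 0 < l := by positivity
  have hl1 : l < 1 := by rw [hl, div_lt_one hsum]; linarith
  have hLl : (ap + am) / ap = l⁻¹ := by rw [hl, inv_div]
  set s : ℝ := (am / ap) ^ ((1:ℝ)/2) with hs
  have hs0 : 0 < s := Real.rpow_pos_of_pos (by positivity) _
  set θ : ℝ → ℝ := fun γ => (1 - γ) / (2 * (γ + 1)) with hθ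
  have hθpos : ∀ γ ∈ Ioo (-1:ℝ) 1, 0 < θ γ := by
    intro γ hγ
    simp only [hθ]
    exact div_pos (by linarith [hγ.2]) (by linarith [hγ.1])
  -- the formula K₀ γ = s * g l (θ γ) on all of Ioo (-1) 1
  have hform : ∀ γ ∈ Ioo (-1:ℝ) 1, K₀ γ = s * Stmt9Aux.g l (θ γ) := by
    intro γ hγ
    rcases eq_or_ne γ 0 with rfl | hγ0
    · rw [hK0]
      have hθ0 : θ 0 = 1/2 := by norm_num [hθ]
      rw [hθ0, Stmt9Aux.g_half hl0 hl1]
      have him : l⁻¹ - 1 = am / ap := by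
        rw [hl, inv_div]; field_simp; ring
      rw [him, hs, ← Real.rpow_add (by positivity : (0:ℝ) < am/ap),
        show (1:ℝ)/2 + 1/2 = 1 by norm_num, Real.rpow_one]
    · have h1 : γ + 1 ≠ 0 := by have := hγ.1; intro h; simp only [mem_Ioo] at hγ; linarith
      have hexp : -(γ / (γ + 1)) = θ γ - 1/2 := by
        simp only [hθ]; field_simp; ring
      rw [hK γ hγ hγ0, Stmt9Aux.g_eq hl0 hl1, hLl]
      simp only [Stmt9Aux.w, hθ]
      rw [hexp]
      simp only [hθ]
      ring
  have hpos : ∀ γ ∈ Ioo (-1:ℝ) 1, 0 < K₀ γ := by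
    intro γ hγ
    rw [hform γ hγ]
    exact mul_pos hs0 (Stmt9Aux.g_pos hl0 hl1 (hθpos γ hγ))
  refine ⟨hpos, ?_, ?_, ?_⟩
  · -- strict anti
    intro γ₁ h₁ γ₂ h₂ h12
    have hθlt : θ γ₂ < θ γ₁ := by
      simp only [hθ]
      rw [div_lt_div_iff₀ (by linarith [h₂.1]) (by linarith [h₁.1])]
      nlinarith
    rw [hform γ₁ h₁, hform γ₂ h₂]
    exact mul_lt_mul_of_pos_left (Stmt9Aux.g_lt hl0 hl1 (hθpos γ₂ h₂) hθlt) hs0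
  · -- tendsto atTop at -1⁺
    have hmem : Ioo (-1:ℝ) 1 ∈ 𝓝[>] (-1:ℝ) :=
      Ioo_mem_nhdsGT_of_mem ⟨le_refl _, by norm_num⟩
    have hD : 0 < ∫ ξ in ((l+1)/2)..1, Stmt9Aux.w ξ * ξ ^ (-(1:ℝ)/2) :=
      Stmt9Aux.D_pos hl0 hl1
    have hθtop : Tendsto θ (𝓝[>] (-1:ℝ)) atTop := by
      have h1 : Tendsto (fun γ : ℝ => 2*(γ+1)) (𝓝[>] (-1:ℝ)) (𝓝[>] 0) := by
        rw [tendsto_nhdsWithin_iff]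
        constructor
        · have hc : Tendsto (fun γ : ℝ => 2*(γ+1)) (𝓝 (-1:ℝ)) (𝓝 (2*((-1)+1))) :=
            (continuous_const.mul (continuous_id.add continuous_const)).tendsto _
          have : (2:ℝ)*((-1)+1) = 0 := by norm_num
          rw [this] at hc
          exact hc.mono_left nhdsWithin_le_nhds
        · filter_upwards [self_mem_nhdsWithin] with γ hγ
          simp only [mem_Ioi] at hγ ⊢
          linarith
      have h2 : Tendsto (fun γ : ℝ => (2*(γ+1))⁻¹) (𝓝[>] (-1:ℝ)) atTop :=
        tendsto_inv_nhdsGT_zero.comp h1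
      have h3 : Tendsto (fun γ : ℝ => (1-γ)) (𝓝[>] (-1:ℝ)) (𝓝 2) := by
        have hc : Tendsto (fun γ : ℝ => (1-γ)) (𝓝 (-1:ℝ)) (𝓝 (1-(-1))) :=
          (continuous_const.sub continuous_id).tendsto _
        have : (1:ℝ)-(-1) = 2 := by norm_num
        rw [this] at hc
        exact hc.mono_left nhdsWithin_le_nhds
      have h4 := h3.pos_mul_atTop (by norm_num : (0:ℝ) < 2) h2
      have : θ = fun γ : ℝ => (1-γ) * (2*(γ+1))⁻¹ := by
        funext γ; rw [hθ]; exact div_eq_mul_inv _ _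
      rw [this]
      exact h4
    have h5 : Tendsto (fun γ => s * (θ γ * ∫ ξ in ((l+1)/2)..1,
        Stmt9Aux.w ξ * ξ ^ (-(1:ℝ)/2))) (𝓝[>] (-1:ℝ)) atTop :=
      (hθtop.atTop_mul_const' hD).const_mul_atTop' hs0
    apply tendsto_atTop_mono' _ _ h5
    filter_upwards [hmem] with γ hγ
    rw [hform γ hγ]
    exact mul_le_mul_of_nonneg_left (Stmt9Aux.g_ge hl0 hl1 (hθpos γ hγ)) hs0.le
  · -- tendsto 0 at 1⁻
    have hmem : Ioo (-1:ℝ) 1 ∈ 𝓝[<] (1:ℝ) :=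
      Ioo_mem_nhdsLT_of_mem ⟨by norm_num, le_refl _⟩
    set C : ℝ := ∫ ξ in l..1, Stmt9Aux.w ξ * ξ ^ (-(1:ℝ)/2) with hC
    have hθ0 : Tendsto θ (𝓝[<] (1:ℝ)) (𝓝 0) := by
      have hc : ContinuousAt θ 1 := by
        simp only [hθ]
        exact ContinuousAt.div (by fun_prop) (by fun_prop) (by norm_num)
      have hv : θ 1 = 0 := by norm_num [hθ]
      have := hc.tendsto.mono_left (nhdsWithin_le_nhds (s := Iio (1:ℝ)))
      rwa [hv] at this
    have hF : ContinuousAt (fun x : ℝ => s * (x * (l⁻¹) ^ x * C)) 0 := by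
      have hb : l⁻¹ ≠ 0 := by positivity
      exact continuousAt_const.mul
        (((continuousAt_id.mul (Real.continuousAt_const_rpow hb)).mul continuousAt_const))
    have hB : Tendsto (fun γ => s * (θ γ * (l⁻¹) ^ (θ γ) * C)) (𝓝[<] (1:ℝ)) (𝓝 0) := by
      have := hF.tendsto.comp hθ0
      simp only [Function.comp_def] at this
      simpa using this
    apply squeeze_zero' ?_ ?_ hB
    · filter_upwards [hmem] with γ hγ
      exact (hpos γ hγ).le
    · filter_upwards [hmem] with γ hγ
      rw [hform γ hγ]
      have := Stmt9Aux.g_le hl0 hl1 (hθpos γ hγ)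
      calc s * Stmt9Aux.g l (θ γ)
          ≤ s * (θ γ * (l⁻¹) ^ (θ γ) * C) := by
            apply mul_le_mul_of_nonneg_left _ hs0.le
            rw [hC]; exact this
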